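/- Define K(p) for a prime p ≥ 5 by K(p) = Σ_{k≥0} [εₘ(k)Pₘ(p,k) + εₐⁿ(k)Pₐⁿ(p,k) + εₐᵗ(p,k)Pₐᵗ(p,k) + P₀(p,k)] with the P's as in the local reduction probabilities and εₘ(k) = (1+√k)/2 for k odd, (√2+√k)/2 for k even, εₐⁿ(k) = 1,√2,(1+√3)/2,(1+√3)/2,√2,1 for k = 2,3,4,8,9,10 (0 otherwise), εₐᵗ(p,6) = 2/3+√2/2−1/(3p), εₐᵗ(p,k) = (√2+2)/2 for k ≥ 7 (0 otherwise). Then K(p) = 1 + O(1/p²), and consequently the product ∏_{p≥5} K(p) converges to a positive real number. -/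

import Mathlib

noncomputable def kap (p : ℕ) : ℝ := (1 - 1 / (p : ℝ) ^ 10)⁻¹

noncomputable def Pm (p k : ℕ) : ℝ :=
  if 1 ≤ k then kap p * (1 - 1 / (p : ℝ)) ^ 2 / (p : ℝ) ^ k else 0

noncomputable def Pan (p k : ℕ) : ℝ :=
  if k = 2 ∨ k = 3 ∨ k = 4 then kap p * (1 - 1 / (p : ℝ)) / (p : ℝ) ^ k
  else if k = 8 ∨ k = 9 ∨ k = 10 then kap p * (1 - 1 / (p : ℝ)) / (p : ℝ) ^ (k - 1)
  else 0

noncomputable def Pat (p k : ℕ) : ℝ :=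
  if k = 6 then kap p * (1 - 1 / (p : ℝ)) / (p : ℝ) ^ 5
  else if 7 ≤ k then kap p * (1 - 1 / (p : ℝ)) ^ 2 / (p : ℝ) ^ (k - 1)
  else 0

noncomputable def P0 (p k : ℕ) : ℝ :=
  if k = 0 then kap p * (1 - 1 / (p : ℝ)) else 0

noncomputable def epsm (k : ℕ) : ℝ :=
  if k % 2 = 1 then (1 + Real.sqrt k) / 2 else (Real.sqrt 2 + Real.sqrt k) / 2

noncomputable def epsan (k : ℕ) : ℝ :=
  if k = 2 then 1 else if k = 3 then Real.sqrt 2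
  else if k = 4 then (1 + Real.sqrt 3) / 2
  else if k = 8 then (1 + Real.sqrt 3) / 2
  else if k = 9 then Real.sqrt 2 else if k = 10 then 1 else 0

noncomputable def epsat (p k : ℕ) : ℝ :=
  if k = 6 then 2 / 3 + Real.sqrt 2 / 2 - 1 / (3 * (p : ℝ))
  else if 7 ≤ k then (Real.sqrt 2 + 2) / 2 else 0

noncomputable def K (p : ℕ) : ℝ :=
  ∑' k : ℕ, (epsm k * Pm p k + epsan k * Pan p k + epsat p k * Pat p k + P0 p k)

/-! ### Auxiliary definitions and lemmas -/

noncomputable def fK (p k : ℕ) : ℝ :=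
  epsm k * Pm p k + epsan k * Pan p k + epsat p k * Pat p k + P0 p k

lemma K_eq (p : ℕ) : K p = ∑' k : ℕ, fK p k := rfl

section aux

variable {p : ℕ}

lemma hp5R (hp : 5 ≤ p) : (5 : ℝ) ≤ (p : ℝ) := by exact_mod_cast hp

lemma hp0R (hp : 5 ≤ p) : (0 : ℝ) < (p : ℝ) := lt_of_lt_of_le (by norm_num) (hp5R hp)

lemma hr_pos (hp : 5 ≤ p) : 0 < 1 / (p : ℝ) := by
  have := hp0R hp; positivity

lemma hr_le (hp : 5 ≤ p) : 1 / (p : ℝ) ≤ 1 / 5 :=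
  one_div_le_one_div_of_le (by norm_num) (hp5R hp)

lemma hr_lt1 (hp : 5 ≤ p) : 1 / (p : ℝ) < 1 := lt_of_le_of_lt (hr_le hp) (by norm_num)

lemma hsub_pos (hp : 5 ≤ p) : 0 < 1 - 1 / (p : ℝ) := by linarith [hr_lt1 hp]

lemma hsub_le1 (hp : 5 ≤ p) : 1 - 1 / (p : ℝ) ≤ 1 := by linarith [hr_pos hp]

lemma hr10_le (hp : 5 ≤ p) : (1 / (p : ℝ)) ^ 10 ≤ 1 / 2 := by
  have h1 : (1 / (p : ℝ)) ^ 10 ≤ (1 / 5 : ℝ) ^ 10 :=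
    pow_le_pow_left₀ (hr_pos hp).le (hr_le hp) 10
  nlinarith

lemma kap_mul (hp : 5 ≤ p) : kap p * (1 - (1 / (p : ℝ)) ^ 10) = 1 := by
  have h := hr10_le hp
  rw [div_pow, one_pow] at h ⊢
  exact inv_mul_cancel₀ (by linarith)

lemma kap_pos (hp : 5 ≤ p) : 0 < kap p := by
  have h := hr10_le hp
  rw [div_pow, one_pow] at h
  have : (0:ℝ) < 1 - 1 / (p : ℝ) ^ 10 := by linarith
  exact inv_pos.mpr this

lemma kap_le_two (hp : 5 ≤ p) : kap p ≤ 2 := by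
  have h1 := kap_mul hp
  have h2 := kap_pos hp
  have h3 := hr10_le hp
  nlinarith [mul_nonneg h2.le (by linarith : (0:ℝ) ≤ 1 - 2 * (1 / (p : ℝ)) ^ 10)]

lemma one_le_kap (hp : 5 ≤ p) : 1 ≤ kap p := by
  have h1 := kap_mul hp
  have h2 := kap_pos hp
  have h3 : (0:ℝ) ≤ (1 / (p : ℝ)) ^ 10 := by positivity
  nlinarith [mul_nonneg h2.le h3]

lemma one_le_sqrt2 : (1 : ℝ) ≤ Real.sqrt 2 := by
  rw [show (1:ℝ) = Real.sqrt 1 by simp]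
  exact Real.sqrt_le_sqrt (by norm_num)

lemma sqrt2_le : Real.sqrt 2 ≤ 3 / 2 := by
  rw [show (3:ℝ)/2 = Real.sqrt ((3/2)^2) by rw [Real.sqrt_sq]; norm_num]
  exact Real.sqrt_le_sqrt (by norm_num)

lemma sqrt3_le : Real.sqrt 3 ≤ 2 := by
  rw [show (2:ℝ) = Real.sqrt (2^2) by rw [Real.sqrt_sq]; norm_num]
  exact Real.sqrt_le_sqrt (by norm_num)

lemma sqrtk_le (k : ℕ) : Real.sqrt k ≤ k := by
  rcases Nat.eq_zero_or_pos k with h | h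
  · simp [h]
  · have h0 : (0:ℝ) ≤ (k:ℝ) := by positivity
    have hs := Real.sq_sqrt h0
    have hsn := Real.sqrt_nonneg (k:ℝ)
    have h1 : (1:ℝ) ≤ (k:ℝ) := by exact_mod_cast h
    nlinarith [sq_nonneg (Real.sqrt k - 1)]

lemma one_le_sqrtk {k : ℕ} (hk : 1 ≤ k) : 1 ≤ Real.sqrt k := by
  rw [show (1:ℝ) = Real.sqrt 1 by simp]
  apply Real.sqrt_le_sqrt
  exact_mod_cast hk

lemma epsm_nonneg (k : ℕ) : 0 ≤ epsm k := by
  unfold epsm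
  have h1 := Real.sqrt_nonneg (k:ℝ)
  have h2 := Real.sqrt_nonneg (2:ℝ)
  split <;> linarith

lemma epsm_le {k : ℕ} (hk : 1 ≤ k) : epsm k ≤ k := by
  unfold epsm
  have h1 := sqrtk_le k
  split_ifs with h
  · have h2 := one_le_sqrtk hk
    linarith
  · have hk2 : 2 ≤ k := by omega
    have h2 : Real.sqrt 2 ≤ Real.sqrt k := Real.sqrt_le_sqrt (by exact_mod_cast hk2)
    linarith

lemma epsan_nonneg (k : ℕ) : 0 ≤ epsan k := by
  have h2 := Real.sqrt_nonneg (2:ℝ)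
  have h3 := Real.sqrt_nonneg (3:ℝ)
  unfold epsan
  split_ifs <;> linarith

lemma epsan_le_two (k : ℕ) : epsan k ≤ 2 := by
  have h2 := sqrt2_le
  have h3 := sqrt3_le
  unfold epsan
  split_ifs <;> linarith

lemma epsan_eq_zero {k : ℕ} (hk : 11 ≤ k) : epsan k = 0 := by
  unfold epsan
  rw [if_neg (by omega), if_neg (by omega), if_neg (by omega), if_neg (by omega),
    if_neg (by omega), if_neg (by omega)]

lemma epsat_nonneg (hp : 5 ≤ p) (k : ℕ) : 0 ≤ epsat p k := by
  unfold epsat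
  have h2 := Real.sqrt_nonneg (2:ℝ)
  split_ifs with h1 h2'
  · have h15 : (15:ℝ) ≤ 3 * (p:ℝ) := by linarith [hp5R hp]
    have : 1 / (3 * (p:ℝ)) ≤ 1 / 15 := one_div_le_one_div_of_le (by norm_num) h15
    linarith
  · linarith
  · exact le_rfl

lemma epsat_le_two (hp : 5 ≤ p) (k : ℕ) : epsat p k ≤ 2 := by
  unfold epsat
  have h2 := sqrt2_le
  split_ifs with h1 h2'
  · have hp3 : (0:ℝ) < 3 * (p:ℝ) := by linarith [hp0R hp]
    have : 0 ≤ 1 / (3 * (p:ℝ)) := by positivity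
    linarith
  · linarith
  · norm_num

lemma div_pow_eq (p : ℕ) (x : ℝ) (n : ℕ) : x / (p:ℝ)^n = x * (1/(p:ℝ))^n := by
  rw [div_pow, one_pow, mul_one_div]

lemma Pm_nonneg (hp : 5 ≤ p) (k : ℕ) : 0 ≤ Pm p k := by
  unfold Pm
  split_ifs
  · exact div_nonneg (mul_nonneg (kap_pos hp).le (sq_nonneg _)) (pow_nonneg (hp0R hp).le _)
  · exact le_rfl

lemma kap_sub_le (hp : 5 ≤ p) : kap p * (1 - 1/(p:ℝ)) ≤ kap p := by
  nlinarith [mul_nonneg (kap_pos hp).le (hr_pos hp).le]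

lemma kap_sq_le (hp : 5 ≤ p) : kap p * (1 - 1/(p:ℝ))^2 ≤ kap p := by
  have h1 : (1 - 1/(p:ℝ))^2 ≤ 1 := by nlinarith [hsub_pos hp, hsub_le1 hp]
  nlinarith [kap_pos hp]

lemma Pm_le (hp : 5 ≤ p) (k : ℕ) : Pm p k ≤ kap p * (1/(p:ℝ))^k := by
  unfold Pm
  split_ifs
  · rw [div_pow_eq]
    exact mul_le_mul_of_nonneg_right (kap_sq_le hp) (pow_nonneg (hr_pos hp).le _)
  · exact mul_nonneg (kap_pos hp).le (pow_nonneg (hr_pos hp).le _)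

lemma pow_sub_one_le (hp : 5 ≤ p) (k : ℕ) : (1/(p:ℝ))^k ≤ (1/(p:ℝ))^(k-1) :=
  pow_le_pow_of_le_one (hr_pos hp).le (hr_lt1 hp).le (Nat.sub_le k 1)

lemma Pan_nonneg (hp : 5 ≤ p) (k : ℕ) : 0 ≤ Pan p k := by
  unfold Pan
  split_ifs
  · exact div_nonneg (mul_nonneg (kap_pos hp).le (hsub_pos hp).le) (pow_nonneg (hp0R hp).le _)
  · exact div_nonneg (mul_nonneg (kap_pos hp).le (hsub_pos hp).le) (pow_nonneg (hp0R hp).le _)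
  · exact le_rfl

lemma Pan_le (hp : 5 ≤ p) (k : ℕ) : Pan p k ≤ kap p * (1/(p:ℝ))^(k-1) := by
  unfold Pan
  split_ifs
  · rw [div_pow_eq]
    calc kap p * (1 - 1/(p:ℝ)) * (1/(p:ℝ))^k
        ≤ kap p * (1/(p:ℝ))^k :=
          mul_le_mul_of_nonneg_right (kap_sub_le hp) (pow_nonneg (hr_pos hp).le _)
      _ ≤ kap p * (1/(p:ℝ))^(k-1) :=
          mul_le_mul_of_nonneg_left (pow_sub_one_le hp k) (kap_pos hp).le
  · rw [div_pow_eq]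
    exact mul_le_mul_of_nonneg_right (kap_sub_le hp) (pow_nonneg (hr_pos hp).le _)
  · exact mul_nonneg (kap_pos hp).le (pow_nonneg (hr_pos hp).le _)

lemma Pat_nonneg (hp : 5 ≤ p) (k : ℕ) : 0 ≤ Pat p k := by
  unfold Pat
  split_ifs
  · exact div_nonneg (mul_nonneg (kap_pos hp).le (hsub_pos hp).le) (pow_nonneg (hp0R hp).le _)
  · exact div_nonneg (mul_nonneg (kap_pos hp).le (sq_nonneg _)) (pow_nonneg (hp0R hp).le _)
  · exact le_rfl

lemma Pat_le (hp : 5 ≤ p) (k : ℕ) : Pat p k ≤ kap p * (1/(p:ℝ))^(k-1) := by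
  unfold Pat
  split_ifs with h1 h2
  · subst h1
    rw [div_pow_eq]
    exact mul_le_mul_of_nonneg_right (kap_sub_le hp) (pow_nonneg (hr_pos hp).le _)
  · rw [div_pow_eq]
    exact mul_le_mul_of_nonneg_right (kap_sq_le hp) (pow_nonneg (hr_pos hp).le _)
  · exact mul_nonneg (kap_pos hp).le (pow_nonneg (hr_pos hp).le _)

lemma P0_nonneg (hp : 5 ≤ p) (k : ℕ) : 0 ≤ P0 p k := by
  unfold P0
  split_ifs
  · exact mul_nonneg (kap_pos hp).le (hsub_pos hp).le
  · exact le_rfl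

lemma P0_eq_zero {k : ℕ} (hk : 1 ≤ k) : P0 p k = 0 := by
  unfold P0
  rw [if_neg (by omega)]

lemma fK_nonneg (hp : 5 ≤ p) (k : ℕ) : 0 ≤ fK p k := by
  unfold fK
  have := mul_nonneg (epsm_nonneg k) (Pm_nonneg hp k)
  have := mul_nonneg (epsan_nonneg k) (Pan_nonneg hp k)
  have := mul_nonneg (epsat_nonneg hp k) (Pat_nonneg hp k)
  have := P0_nonneg hp k
  linarith

lemma epsm_Pm_le (hp : 5 ≤ p) (k : ℕ) : epsm k * Pm p k ≤ kap p * ((k:ℝ) * (1/(p:ℝ))^k) := by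
  rcases Nat.eq_zero_or_pos k with h | h
  · subst h
    simp [Pm]
  · calc epsm k * Pm p k
        ≤ (k:ℝ) * (kap p * (1/(p:ℝ))^k) :=
          mul_le_mul (epsm_le h) (Pm_le hp k) (Pm_nonneg hp k) (by positivity)
      _ = kap p * ((k:ℝ) * (1/(p:ℝ))^k) := by ring

lemma epsan_Pan_le (hp : 5 ≤ p) (k : ℕ) :
    epsan k * Pan p k ≤ kap p * (2 * (1/(p:ℝ))^(k-1)) := by
  calc epsan k * Pan p k
      ≤ 2 * (kap p * (1/(p:ℝ))^(k-1)) :=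
        mul_le_mul (epsan_le_two k) (Pan_le hp k) (Pan_nonneg hp k) (by norm_num)
    _ = kap p * (2 * (1/(p:ℝ))^(k-1)) := by ring

lemma epsat_Pat_le (hp : 5 ≤ p) (k : ℕ) :
    epsat p k * Pat p k ≤ kap p * (2 * (1/(p:ℝ))^(k-1)) := by
  calc epsat p k * Pat p k
      ≤ 2 * (kap p * (1/(p:ℝ))^(k-1)) :=
        mul_le_mul (epsat_le_two hp k) (Pat_le hp k) (Pat_nonneg hp k) (by norm_num)
    _ = kap p * (2 * (1/(p:ℝ))^(k-1)) := by ring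

lemma fK_tail_le (hp : 5 ≤ p) (k : ℕ) :
    fK p (k+3) ≤ kap p * (((k:ℝ)+7) * (1/(p:ℝ))^(k+2)) := by
  have e1 := epsm_Pm_le hp (k+3)
  have e2 := epsan_Pan_le hp (k+3)
  have e3 := epsat_Pat_le hp (k+3)
  have e4 : P0 p (k+3) = 0 := P0_eq_zero (by omega)
  have hsub : k + 3 - 1 = k + 2 := by omega
  rw [hsub] at e2 e3
  have hpow : (1/(p:ℝ))^(k+3) ≤ (1/(p:ℝ))^(k+2) :=
    pow_le_pow_of_le_one (hr_pos hp).le (hr_lt1 hp).le (by omega)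
  have hcast : ((k+3:ℕ):ℝ) = (k:ℝ)+3 := by push_cast; ring
  have h5 : kap p * (((k+3:ℕ):ℝ) * (1/(p:ℝ))^(k+3))
      ≤ kap p * (((k:ℝ)+3) * (1/(p:ℝ))^(k+2)) := by
    rw [hcast]
    exact mul_le_mul_of_nonneg_left
      (mul_le_mul_of_nonneg_left hpow (by positivity)) (kap_pos hp).le
  have e1' := e1.trans h5
  have hsplit : kap p * (((k:ℝ)+7) * (1/(p:ℝ))^(k+2))
      = kap p * (((k:ℝ)+3) * (1/(p:ℝ))^(k+2)) + kap p * (2 * (1/(p:ℝ))^(k+2))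
        + kap p * (2 * (1/(p:ℝ))^(k+2)) := by ring
  unfold fK
  rw [e4, hsplit]
  linarith

lemma hnorm (hp : 5 ≤ p) : ‖(1/(p:ℝ))‖ < 1 := by
  rw [Real.norm_eq_abs, abs_of_pos (hr_pos hp)]
  exact hr_lt1 hp

lemma summable_k_geo (hp : 5 ≤ p) : Summable (fun k : ℕ => (k:ℝ) * (1/(p:ℝ))^k) := by
  have := summable_pow_mul_geometric_of_norm_lt_one 1 (hnorm hp)
  simpa using this

lemma summable_geo (hp : 5 ≤ p) : Summable (fun k : ℕ => (1/(p:ℝ))^k) :=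
  summable_geometric_of_lt_one (hr_pos hp).le (hr_lt1 hp)

lemma summable_geo' (hp : 5 ≤ p) : Summable (fun k : ℕ => (1/(p:ℝ))^(k-1)) := by
  apply (summable_nat_add_iff 1).mp
  simpa using summable_geo hp

lemma summable_fK (hp : 5 ≤ p) : Summable (fK p) := by
  have S1 : Summable (fun k => epsm k * Pm p k) :=
    Summable.of_nonneg_of_le (fun k => mul_nonneg (epsm_nonneg k) (Pm_nonneg hp k))
      (fun k => epsm_Pm_le hp k) ((summable_k_geo hp).mul_left (kap p))
  have S2 : Summable (fun k => epsan k * Pan p k) := by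
    apply summable_of_ne_finset_zero (s := Finset.range 11)
    intro k hk
    have hk' : ¬ k < 11 := by simpa using hk
    rw [epsan_eq_zero (by omega), zero_mul]
  have S3 : Summable (fun k => epsat p k * Pat p k) :=
    Summable.of_nonneg_of_le (fun k => mul_nonneg (epsat_nonneg hp k) (Pat_nonneg hp k))
      (fun k => epsat_Pat_le hp k) (((summable_geo' hp).mul_left 2).mul_left (kap p))
  have S4 : Summable (fun k => P0 p k) := by
    apply summable_of_ne_finset_zero (s := Finset.range 1)
    intro k hk
    have hk' : ¬ k < 1 := by simpa using hk
    exact P0_eq_zero (by omega)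
  exact ((S1.add S2).add S3).add S4

lemma fK0 : fK p 0 = kap p * (1 - 1/(p:ℝ)) := by
  simp [fK, Pm, Pan, Pat, P0, epsan, epsat]

lemma fK1 : fK p 1 = kap p * (1 - 1/(p:ℝ))^2 * (1/(p:ℝ)) := by
  simp [fK, Pm, Pan, Pat, P0, epsm, epsan, epsat]
  ring

lemma fK2 : fK p 2 = Real.sqrt 2 * (kap p * (1 - 1/(p:ℝ))^2) * (1/(p:ℝ))^2
    + kap p * (1 - 1/(p:ℝ)) * (1/(p:ℝ))^2 := by
  simp [fK, Pm, Pan, Pat, P0, epsm, epsan, epsat]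
  ring

lemma head_bound (hp : 5 ≤ p) :
    |fK p 0 + fK p 1 + fK p 2 - 1| ≤ 6 * (1/(p:ℝ))^2 := by
  have hs0 : (0:ℝ) ≤ Real.sqrt 2 := Real.sqrt_nonneg 2
  have hs1 := one_le_sqrt2
  have hs2 := sqrt2_le
  have hkm := kap_mul hp
  have hκ2 := kap_le_two hp
  have hκ0 := kap_pos hp
  have hr0 := (hr_pos hp).le
  have hr5 := hr_le hp
  rw [fK0, fK1, fK2]
  set r := 1/(p:ℝ) with hrdef
  set s := Real.sqrt 2 with hsdef
  set κ := kap p with hκdef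
  have hE : κ*(1-r) + κ*(1-r)^2*r + (s*(κ*(1-r)^2)*r^2 + κ*(1-r)*r^2) - 1
      = κ * ((s-1)*r^2 - 2*s*r^3 + s*r^4 + r^10) := by
    linear_combination hkm
  rw [hE, abs_mul, abs_of_pos hκ0]
  have hr2 : (0:ℝ) ≤ r^2 := sq_nonneg r
  have h25 : r^2 ≤ 1/25 := by nlinarith
  have h3 : r^3 ≤ (1/5)*r^2 := by nlinarith
  have h3' : (0:ℝ) ≤ r^3 := by positivity
  have h4 : r^4 ≤ (1/25)*r^2 := by nlinarith
  have h4' : (0:ℝ) ≤ r^4 := by positivity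
  have h10 : r^10 ≤ r^2 := pow_le_pow_of_le_one hr0 (by linarith) (by norm_num)
  have h10' : (0:ℝ) ≤ r^10 := by positivity
  have hX : |(s-1)*r^2 - 2*s*r^3 + s*r^4 + r^10| ≤ 3*r^2 := by
    rw [abs_le]
    constructor
    · nlinarith [mul_nonneg (by linarith : (0:ℝ) ≤ s - 1) hr2, mul_nonneg hs0 h4']
    · nlinarith [mul_nonneg hs0 h3', mul_nonneg (by linarith : (0:ℝ) ≤ s - 1) hr2]
  calc κ * |(s-1)*r^2 - 2*s*r^3 + s*r^4 + r^10|
      ≤ 2 * |(s-1)*r^2 - 2*s*r^3 + s*r^4 + r^10| :=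
        mul_le_mul_of_nonneg_right hκ2 (abs_nonneg _)
    _ ≤ 2 * (3*r^2) := by linarith
    _ = 6 * r^2 := by ring

lemma tail_bound (hp : 5 ≤ p) : ∑' k : ℕ, fK p (k+3) ≤ 19 * (1/(p:ℝ))^2 := by
  have hsumf : Summable (fun k => fK p (k+3)) := (summable_nat_add_iff 3).mpr (summable_fK hp)
  have hgsum : Summable (fun k : ℕ => kap p * (((k:ℝ)+7) * (1/(p:ℝ))^(k+2))) := by
    apply Summable.congr
      (((summable_k_geo hp).mul_left (kap p * (1/(p:ℝ))^2)).add
        ((summable_geo hp).mul_left (7 * (kap p * (1/(p:ℝ))^2))))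
    intro k
    ring
  have hcomp := Summable.tsum_le_tsum (fK_tail_le hp) hsumf hgsum
  refine hcomp.trans ?_
  have hgeq : ∑' k : ℕ, kap p * (((k:ℝ)+7) * (1/(p:ℝ))^(k+2))
      = (kap p * (1/(p:ℝ))^2) * ((1/(p:ℝ))/(1-(1/(p:ℝ)))^2)
        + (7 * (kap p * (1/(p:ℝ))^2)) * (1-(1/(p:ℝ)))⁻¹ := by
    rw [show (fun k : ℕ => kap p * (((k:ℝ)+7) * (1/(p:ℝ))^(k+2)))
        = (fun k : ℕ => (kap p * (1/(p:ℝ))^2) * ((k:ℝ)*(1/(p:ℝ))^k)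
          + (7 * (kap p * (1/(p:ℝ))^2)) * (1/(p:ℝ))^k) from funext fun k => by ring]
    rw [Summable.tsum_add ((summable_k_geo hp).mul_left _) ((summable_geo hp).mul_left _),
      tsum_mul_left, tsum_mul_left,
      tsum_coe_mul_geometric_of_norm_lt_one (hnorm hp),
      tsum_geometric_of_lt_one (hr_pos hp).le (hr_lt1 hp)]
  rw [hgeq]
  have hr0 := (hr_pos hp).le
  have hr5 := hr_le hp
  have hκ0 := kap_pos hp
  have hκ2 := kap_le_two hp
  have hsubp := hsub_pos hp
  have hsq : (0:ℝ) < (1-(1/(p:ℝ)))^2 := by positivity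
  have hA0 : (0:ℝ) ≤ (1/(p:ℝ))/(1-(1/(p:ℝ)))^2 := div_nonneg hr0 hsq.le
  have hB0 : (0:ℝ) ≤ (1-(1/(p:ℝ)))⁻¹ := inv_nonneg.mpr hsubp.le
  have ha : (1/(p:ℝ))/(1-(1/(p:ℝ)))^2 ≤ 5/16 := by
    rw [div_le_iff₀ hsq]
    nlinarith [mul_nonneg (by linarith : (0:ℝ) ≤ 1 - 5*(1/(p:ℝ)))
      (by linarith : (0:ℝ) ≤ 5 - (1/(p:ℝ)))]
  have hb : (1-(1/(p:ℝ)))⁻¹ ≤ 5/4 := by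
    rw [show (5:ℝ)/4 = ((4:ℝ)/5)⁻¹ by norm_num]
    exact inv_anti₀ (by norm_num) (by linarith)
  have hr2 : (0:ℝ) ≤ (1/(p:ℝ))^2 := sq_nonneg _
  have t0 : kap p * (1/(p:ℝ))^2 ≤ 2 * (1/(p:ℝ))^2 :=
    mul_le_mul_of_nonneg_right hκ2 hr2
  have t0' : (0:ℝ) ≤ kap p * (1/(p:ℝ))^2 := mul_nonneg hκ0.le hr2
  have t1 : (kap p * (1/(p:ℝ))^2) * ((1/(p:ℝ))/(1-(1/(p:ℝ)))^2)
      ≤ (2*(1/(p:ℝ))^2) * (5/16) :=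
    mul_le_mul t0 ha hA0 (by linarith)
  have t2 : (7 * (kap p * (1/(p:ℝ))^2)) * (1-(1/(p:ℝ)))⁻¹
      ≤ (7 * (2*(1/(p:ℝ))^2)) * (5/4) :=
    mul_le_mul (by linarith) hb hB0 (by linarith)
  nlinarith

lemma K_bound (hp : 5 ≤ p) : |K p - 1| ≤ 25 * (1/(p:ℝ))^2 := by
  have hsum := summable_fK hp
  have hsplit := Summable.sum_add_tsum_nat_add 3 hsum
  have hK : K p = (fK p 0 + fK p 1 + fK p 2) + ∑' i : ℕ, fK p (i+3) := by
    rw [K_eq, ← hsplit]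
    congr 1
    simp [Finset.sum_range_succ]
  have hT0 : 0 ≤ ∑' i : ℕ, fK p (i+3) := tsum_nonneg fun i => fK_nonneg hp _
  have hT := tail_bound hp
  have hH := head_bound hp
  rw [hK]
  have habs : |(fK p 0 + fK p 1 + fK p 2) + (∑' i : ℕ, fK p (i+3)) - 1|
      ≤ |fK p 0 + fK p 1 + fK p 2 - 1| + |∑' i : ℕ, fK p (i+3)| := by
    rw [show (fK p 0 + fK p 1 + fK p 2) + (∑' i : ℕ, fK p (i+3)) - 1
        = (fK p 0 + fK p 1 + fK p 2 - 1) + (∑' i : ℕ, fK p (i+3)) by ring]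
    exact abs_add_le _ _
  rw [abs_of_nonneg hT0] at habs
  linarith

lemma K_lower (hp : 5 ≤ p) : kap p * (1 - 1/(p:ℝ)) ≤ K p := by
  rw [K_eq, ← fK0]
  exact Summable.le_tsum (summable_fK hp) 0 (fun j _ => fK_nonneg hp j)

lemma K_pos (hp : 5 ≤ p) : 0 < K p :=
  lt_of_lt_of_le (mul_pos (kap_pos hp) (hsub_pos hp)) (K_lower hp)

lemma K_ge (hp : 5 ≤ p) : 4/5 ≤ K p := by
  refine le_trans ?_ (K_lower hp)
  nlinarith [one_le_kap hp, hr_le hp, hsub_pos hp]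

lemma log_bound (hp : 5 ≤ p) : |Real.log (K p)| ≤ 32 * (1/(p:ℝ))^2 := by
  have h1 := K_bound hp
  have h2 := K_ge hp
  have h0 := K_pos hp
  have habs := abs_le.mp h1
  have hr2 : (0:ℝ) ≤ (1/(p:ℝ))^2 := sq_nonneg _
  have hup : Real.log (K p) ≤ 32*(1/(p:ℝ))^2 := by
    have := Real.log_le_sub_one_of_pos h0
    linarith [habs.2]
  have hlow : -(32*(1/(p:ℝ))^2) ≤ Real.log (K p) := by
    have hinv := Real.log_le_sub_one_of_pos (inv_pos.mpr h0)
    rw [Real.log_inv] at hinv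
    have hKinv : (K p)⁻¹ ≤ 5/4 := by
      rw [show (5:ℝ)/4 = ((4:ℝ)/5)⁻¹ by norm_num]
      exact inv_anti₀ (by norm_num) h2
    have hKmul : K p * (K p)⁻¹ = 1 := mul_inv_cancel₀ (ne_of_gt h0)
    have hinv0 : (0:ℝ) < (K p)⁻¹ := inv_pos.mpr h0
    nlinarith [mul_nonneg (by linarith [habs.1] : (0:ℝ) ≤ K p - 1 + 25*(1/(p:ℝ))^2) hinv0.le,
      mul_nonneg hr2 (by linarith : (0:ℝ) ≤ 5/4 - (K p)⁻¹)]
  exact abs_le.mpr ⟨hlow, hup⟩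

end aux

theorem stmt15 :
    (∃ C > (0 : ℝ), ∀ p : ℕ, p.Prime → 5 ≤ p → |K p - 1| ≤ C / (p : ℝ) ^ 2) ∧
    Multipliable (fun p : {p : ℕ // p.Prime ∧ 5 ≤ p} => K p) ∧
    0 < ∏' p : {p : ℕ // p.Prime ∧ 5 ≤ p}, K p := by
  have hb : Summable (fun q : {p : ℕ // p.Prime ∧ 5 ≤ p} => (32:ℝ)/((q:ℕ):ℝ)^2) := by
    have h0 : Summable (fun n : ℕ => (32:ℝ)/(n:ℝ)^2) := by
      have h1 := Real.summable_one_div_nat_pow.mpr (by norm_num : 1 < 2)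
      exact (h1.mul_left (32:ℝ)).congr fun n => by rw [mul_one_div]
    exact h0.comp_injective Subtype.val_injective
  have hlog : Summable (fun q : {p : ℕ // p.Prime ∧ 5 ≤ p} => Real.log (K q)) := by
    apply Summable.of_norm_bounded hb
    intro q
    rw [Real.norm_eq_abs]
    have h5 : 5 ≤ (q:ℕ) := q.2.2
    calc |Real.log (K q)| ≤ 32 * (1/((q:ℕ):ℝ))^2 := log_bound h5
      _ = 32/((q:ℕ):ℝ)^2 := by rw [div_pow, one_pow, mul_one_div]
  have hprod : HasProd (fun q : {p : ℕ // p.Prime ∧ 5 ≤ p} => K q)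
      (Real.exp (∑' q : {p : ℕ // p.Prime ∧ 5 ≤ p}, Real.log (K q))) := by
    have h := hlog.hasSum.rexp
    have heq : (Real.exp ∘ fun q : {p : ℕ // p.Prime ∧ 5 ≤ p} => Real.log (K q))
        = fun q : {p : ℕ // p.Prime ∧ 5 ≤ p} => K q :=
      funext fun q => Real.exp_log (K_pos q.2.2)
    rwa [heq] at h
  refine ⟨⟨25, by norm_num, fun p hp hp5 => ?_⟩, hprod.multipliable, ?_⟩
  · calc |K p - 1| ≤ 25 * (1/(p:ℝ))^2 := K_bound hp5
      _ = 25 / (p:ℝ)^2 := by rw [div_pow, one_pow, mul_one_div]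
  · rw [hprod.tprod_eq]
    exact Real.exp_pos _
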